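/- The set of lines {v ∈ L : B(v,v) = −1, B(v,K) = −1, B(v,C) = 0} is exactly the set {l₁, …, lₙ} ∪ {f − l₁, …, f − lₙ}; in particular it has exactly 2n elements. -/

import Mathlib

noncomputable section
namespace ADEPaper

/-- The Picard lattice `L = ℤ^{n+2}` with basis `f = e 0`, `s = e 1`, `lᵢ = e_{i+1}` for
`1 ≤ i ≤ n`. -/
abbrev L (n : ℕ) : Type := Fin (n + 2) → ℤ

/-- The intersection form: `B(f,f) = B(s,s) = 0`, `B(f,s) = 1`, `B(lᵢ,lᵢ) = -1`, all other
pairs of distinct basis vectors orthogonal. -/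
def B (n : ℕ) (v w : L n) : ℤ :=
  v 0 * w 1 + v 1 * w 0 - ∑ i : Fin n, v i.succ.succ * w i.succ.succ

/-- The class `f` of a fiber of the ruling. -/
def f (n : ℕ) : L n := fun j => if (j : ℕ) = 0 then 1 else 0

/-- The exceptional class `l i` here denotes `l_{i+1}` of the paper, `i : Fin n`. -/
def l (n : ℕ) (i : Fin n) : L n := fun j => if (j : ℕ) = (i : ℕ) + 2 then 1 else 0

/-- The canonical class `K = -2f - 2s + l₁ + ⋯ + lₙ`. -/
def K (n : ℕ) : L n := fun j => if (j : ℕ) ≤ 1 then -2 else 1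

/-- `C = f`, a fiber of the ruling of the `Dₙ`-surface. -/
def C (n : ℕ) : L n := f n

variable {n : ℕ}

lemma L_ext {v w : L n} (h0 : v 0 = w 0) (h1 : v 1 = w 1)
    (h : ∀ i : Fin n, v i.succ.succ = w i.succ.succ) : v = w := by
  funext j
  obtain ⟨jv, hj⟩ := j
  match jv with
  | 0 => exact h0
  | 1 =>
    have : (⟨1, hj⟩ : Fin (n+2)) = 1 := by ext; simp
    rw [this]; exact h1
  | k + 2 =>
    have hk : k < n := by omega
    exact h ⟨k, hk⟩

lemma f_zero : f n 0 = 1 := rfl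
lemma f_one : f n 1 = 0 := by simp [f]
lemma f_ss (i : Fin n) : f n i.succ.succ = 0 := by simp [f]
lemma l_zero (i : Fin n) : l n i 0 = 0 := by simp [l]
lemma l_one (i : Fin n) : l n i 1 = 0 := by simp [l]
lemma l_ss (i j : Fin n) : l n i j.succ.succ = if j = i then 1 else 0 := by
  simp [l, Fin.val_succ, Fin.val_inj]

lemma B_C (v : L n) : B n v (C n) = v 1 := by
  simp [B, C, f_one, f_zero, f_ss]

lemma B_K (v : L n) : B n v (K n) = -2 * v 0 - 2 * v 1 - ∑ i : Fin n, v i.succ.succ := by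
  have h0 : K n 0 = -2 := rfl
  have h1 : K n 1 = -2 := by simp [K]
  have hs : ∀ i : Fin n, K n i.succ.succ = 1 := fun i => by simp [K]
  simp [B, h0, h1, hs]; ring

lemma mem_lines_iff (v : L n) :
    (B n v v = -1 ∧ B n v (K n) = -1 ∧ B n v (C n) = 0) ↔
      (∃ i : Fin n, v = l n i) ∨ (∃ i : Fin n, v = f n - l n i) := by
  constructor
  · rintro ⟨h1, h2, h3⟩
    rw [B_C] at h3
    rw [B_K, h3] at h2
    rw [B] at h1
    rw [h3] at h1
    set w : Fin n → ℤ := fun i => v i.succ.succ with hw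
    have hsum : ∑ i : Fin n, w i * w i = 1 := by linarith
    have hex : ∃ i : Fin n, w i ≠ 0 := by
      by_contra hc
      push_neg at hc
      simp [hc] at hsum
    obtain ⟨i, hi⟩ := hex
    have hpos : 0 < w i * w i := mul_self_pos.mpr hi
    have hle : w i * w i ≤ 1 := by
      rw [← hsum]
      exact Finset.single_le_sum (fun j _ => mul_self_nonneg (w j)) (Finset.mem_univ i)
    have hi1 : w i * w i = 1 := le_antisymm hle hpos
    have hrest : ∀ j : Fin n, j ≠ i → w j = 0 := by
      have hsplit : w i * w i + ∑ j ∈ Finset.univ.erase i, w j * w j = ∑ j : Fin n, w j * w j :=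
        Finset.add_sum_erase Finset.univ (fun j => w j * w j) (Finset.mem_univ i)
      have hzero : ∑ j ∈ Finset.univ.erase i, w j * w j = 0 := by
        rw [hsum, hi1] at hsplit; linarith
      intro j hj
      have := (Finset.sum_eq_zero_iff_of_nonneg (fun k _ => mul_self_nonneg (w k))).mp hzero j
        (Finset.mem_erase.mpr ⟨hj, Finset.mem_univ j⟩)
      exact mul_self_eq_zero.mp this
    have hsumw : ∑ j : Fin n, w j = w i :=
      Finset.sum_eq_single i (fun j _ hj => hrest j hj) (fun h => absurd (Finset.mem_univ i) h)
    rcases Int.isUnit_iff.mp (IsUnit.of_mul_eq_one _ hi1) with h | h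
    · -- w i = 1, so v = l n i
      left
      refine ⟨i, L_ext ?_ ?_ ?_⟩
      · rw [l_zero]
        rw [hsumw, h] at h2
        linarith
      · rw [l_one]; exact h3
      · intro j
        rw [l_ss]
        by_cases hji : j = i
        · subst hji; rw [if_pos rfl]; exact h
        · rw [if_neg hji]; exact hrest j hji
    · -- w i = -1, so v = f n - l n i
      right
      refine ⟨i, L_ext ?_ ?_ ?_⟩
      · simp only [Pi.sub_apply, f_zero, l_zero]
        rw [hsumw, h] at h2
        linarith
      · simp only [Pi.sub_apply, f_one, l_one]; linarith
      · intro j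
        simp only [Pi.sub_apply, f_ss, l_ss]
        by_cases hji : j = i
        · subst hji; rw [if_pos rfl]; show w j = 0 - 1; omega
        · rw [if_neg hji]
          show w j = 0 - 0
          rw [hrest j hji]; ring
  · rintro (⟨i, rfl⟩ | ⟨i, rfl⟩)
    · refine ⟨?_, ?_, ?_⟩
      · rw [B]
        simp [l_zero, l_one, l_ss]
      · rw [B_K]
        simp [l_zero, l_one, l_ss]
      · rw [B_C, l_one]
    · refine ⟨?_, ?_, ?_⟩
      · rw [B]
        simp only [Pi.sub_apply, f_zero, f_one, f_ss, l_zero, l_one, l_ss]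
        simp [sub_mul, mul_sub, Finset.sum_sub_distrib]
      · rw [B_K]
        simp [f_zero, f_one, f_ss, l_zero, l_one, l_ss, Finset.sum_sub_distrib]
      · rw [B_C]
        simp [f_one, l_one]

/-- The set of lines on a `Dₙ`-surface (`n ≥ 3`) is exactly
`{l₁, …, lₙ} ∪ {f - l₁, …, f - lₙ}`; in particular it has exactly `2n` elements. -/
theorem Dn_lines (n : ℕ) (hn : 3 ≤ n) :
    {v : L n | B n v v = -1 ∧ B n v (K n) = -1 ∧ B n v (C n) = 0}
      = (Set.range fun i : Fin n => l n i) ∪ (Set.range fun i : Fin n => f n - l n i) ∧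
    {v : L n | B n v v = -1 ∧ B n v (K n) = -1 ∧ B n v (C n) = 0}.ncard = 2 * n := by
  have hset : {v : L n | B n v v = -1 ∧ B n v (K n) = -1 ∧ B n v (C n) = 0}
      = (Set.range fun i : Fin n => l n i) ∪ (Set.range fun i : Fin n => f n - l n i) := by
    ext v
    simpa [Set.mem_union, Set.mem_range, eq_comm] using mem_lines_iff v
  refine ⟨hset, ?_⟩
  rw [hset]
  have hlinj : Function.Injective (fun i : Fin n => l n i) := by
    intro i j h
    have := congrFun h i.succ.succ
    simp [l_ss] at this
    by_contra hij
    simp [hij] at this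
  have hflinj : Function.Injective (fun i : Fin n => f n - l n i) := by
    intro i j h
    have := congrFun h i.succ.succ
    simp only [Pi.sub_apply, f_ss, l_ss] at this
    by_contra hij
    simp [hij] at this
  have hdisj : Disjoint (Set.range fun i : Fin n => l n i)
      (Set.range fun i : Fin n => f n - l n i) := by
    rw [Set.disjoint_left]
    rintro v ⟨i, rfl⟩ ⟨j, hj⟩
    have := congrFun hj 0
    simp [l_zero, f_zero] at this
  rw [Set.ncard_union_eq hdisj (Set.finite_range _) (Set.finite_range _),
    ← Set.image_univ, ← Set.image_univ, Set.ncard_image_of_injective _ hlinj,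
    Set.ncard_image_of_injective _ hflinj, Set.ncard_univ, Nat.card_eq_fintype_card,
    Fintype.card_fin]
  ring

end ADEPaper
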